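/- arXiv:1803.02899 — 2 statements merged into one kernel-verified Lean document; each statement's English description precedes it below -/
import Mathlib

section
/- Every finite EI-category (a category in which every endomorphism is an isomorphism) has skeletal Möbius inversion. -/
set_option linter.unusedSectionVars false



open CategoryTheory
open scoped Classical

universe u v

/-- Convolution product on the Möbius algebra of rational-valued functions
on pairs of objects of a finite category. -/
noncomputable def conv (C : Type u) [Category.{v} C] [Fintype C]
    (α β : C → C → ℚ) : C → C → ℚ :=
  fun x y => ∑ z : C, α x z * β z y

/-- The size of the isomorphism class of an object. -/
noncomputable def isoCard (C : Type u) [Category.{v} C] [Fintype C] (x : C) : ℚ :=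
  ((Finset.univ.filter fun z : C => Nonempty (x ≅ z)).card : ℚ)

/-- The idempotent `e_C` : `e_C(x,y) = 1/|[x]|` if `x ≅ y`, and `0` otherwise. -/
noncomputable def eFun (C : Type u) [Category.{v} C] [Fintype C] : C → C → ℚ :=
  fun x y => if Nonempty (x ≅ y) then 1 / isoCard C x else 0

/-- The zeta function of a finite category: `ζ_C(x,y) = |C(x,y)|`. -/
noncomputable def zeta (C : Type u) [Category.{v} C] [Fintype C]
    [∀ x y : C, Fintype (x ⟶ y)] : C → C → ℚ :=
  fun x y => (Fintype.card (x ⟶ y) : ℚ)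

/-- The Kronecker delta, the multiplicative identity of the Möbius algebra. -/
noncomputable def delta (C : Type u) [Category.{v} C] [Fintype C] : C → C → ℚ :=
  fun x y => if x = y then 1 else 0

section Aux

variable {C : Type u} [Category.{v} C] [Fintype C] [∀ x y : C, Fintype (x ⟶ y)]

/-- In an EI-category, a pair of back-and-forth morphisms yields an isomorphism. -/
lemma aux_iso_of_hom_of_hom (hEI : ∀ (x : C) (f : x ⟶ x), IsIso f)
    {x y : C} (f : x ⟶ y) (g : y ⟶ x) : Nonempty (x ≅ y) := by
  haveI := hEI x (f ≫ g)
  set r : y ⟶ x := g ≫ inv (f ≫ g) with hr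
  have h1 : f ≫ r = 𝟙 x := by
    rw [hr, ← Category.assoc, IsIso.hom_inv_id]
  haveI := hEI y (r ≫ f)
  have h2 : (r ≫ f) ≫ (r ≫ f) = (r ≫ f) ≫ 𝟙 y := by
    calc (r ≫ f) ≫ (r ≫ f) = r ≫ (f ≫ r) ≫ f := by simp only [Category.assoc]
    _ = r ≫ f := by rw [h1, Category.id_comp]
    _ = (r ≫ f) ≫ 𝟙 y := by rw [Category.comp_id]
  have h4 : r ≫ f = 𝟙 y := (cancel_epi (r ≫ f)).mp h2
  exact ⟨⟨f, r, h1, h4⟩⟩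

lemma aux_hom_card_congr {x x' y y' : C} (e1 : x ≅ x') (e2 : y ≅ y') :
    Fintype.card (x ⟶ y) = Fintype.card (x' ⟶ y') := by
  refine Fintype.card_congr ⟨fun f => e1.inv ≫ f ≫ e2.hom, fun g => e1.hom ≫ g ≫ e2.inv, ?_, ?_⟩
  · intro f; simp
  · intro g; simp

lemma aux_isoCard_congr {x z : C} (e : Nonempty (x ≅ z)) : isoCard C x = isoCard C z := by
  unfold isoCard
  congr 2
  apply Finset.filter_congr
  intro w _
  constructor
  · rintro ⟨i⟩; exact ⟨e.some.symm.trans i⟩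
  · rintro ⟨i⟩; exact ⟨e.some.trans i⟩

lemma aux_isoCard_pos (x : C) : 0 < isoCard C x := by
  unfold isoCard
  have : x ∈ Finset.univ.filter fun z : C => Nonempty (x ≅ z) :=
    Finset.mem_filter.mpr ⟨Finset.mem_univ x, ⟨Iso.refl x⟩⟩
  exact_mod_cast Finset.card_pos.mpr ⟨x, this⟩

lemma aux_isoCard_ne (x : C) : isoCard C x ≠ 0 := ne_of_gt (aux_isoCard_pos x)

/-- Generic sum computation over an isomorphism class. -/
lemma aux_sum_eq (P : C → Prop) (f : C → ℚ) (c : ℚ)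
    (h0 : ∀ z, ¬ P z → f z = 0) (h1 : ∀ z, P z → f z = c) :
    ∑ z : C, f z = ((Finset.univ.filter P).card : ℚ) * c := by
  classical
  rw [← Finset.sum_filter_add_sum_filter_not Finset.univ P]
  rw [Finset.sum_congr rfl (fun z hz => h1 z (Finset.mem_filter.mp hz).2),
      Finset.sum_congr rfl (fun z hz => h0 z (by simpa using (Finset.mem_filter.mp hz).2))]
  simp [Finset.sum_const, nsmul_eq_mul]

lemma aux_isoCard_symm (y : C) :
    ((Finset.univ.filter fun z : C => Nonempty (z ≅ y)).card : ℚ) = isoCard C y := by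
  unfold isoCard
  congr 2
  apply Finset.filter_congr
  intro w _
  exact ⟨fun ⟨i⟩ => ⟨i.symm⟩, fun ⟨i⟩ => ⟨i.symm⟩⟩

open Matrix in
lemma aux_EZ : (Matrix.of (eFun C)) * (Matrix.of (zeta C)) = Matrix.of (zeta C) := by
  ext x y
  rw [Matrix.mul_apply]
  show ∑ z : C, eFun C x z * zeta C z y = zeta C x y
  rw [aux_sum_eq (fun z => Nonempty (x ≅ z)) _ ((1 / isoCard C x) * zeta C x y)
    (fun z hz => by simp [eFun, hz])
    (fun z hz => by
      have hz' : zeta C z y = zeta C x y := by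
        unfold zeta; rw [aux_hom_card_congr hz.some.symm (Iso.refl y)]
      simp [eFun, hz, hz'])]
  show isoCard C x * (1 / isoCard C x * zeta C x y) = zeta C x y
  rw [← mul_assoc, mul_one_div, div_self (aux_isoCard_ne x), one_mul]

open Matrix in
lemma aux_ZE : (Matrix.of (zeta C)) * (Matrix.of (eFun C)) = Matrix.of (zeta C) := by
  ext x y
  rw [Matrix.mul_apply]
  show ∑ z : C, zeta C x z * eFun C z y = zeta C x y
  rw [aux_sum_eq (fun z => Nonempty (z ≅ y)) _ (zeta C x y * (1 / isoCard C y))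
    (fun z hz => by simp [eFun, hz])
    (fun z hz => by
      have hz1 : zeta C x z = zeta C x y := by
        unfold zeta; rw [aux_hom_card_congr (Iso.refl x) hz.some]
      have hz2 : isoCard C z = isoCard C y := aux_isoCard_congr hz
      simp [eFun, hz, hz1, hz2])]
  rw [aux_isoCard_symm]
  rw [mul_comm (zeta C x y), ← mul_assoc, mul_one_div, div_self (aux_isoCard_ne y), one_mul]

open Matrix in
lemma aux_EE : (Matrix.of (eFun C)) * (Matrix.of (eFun C)) = Matrix.of (eFun C) := by
  ext x y
  rw [Matrix.mul_apply]
  show ∑ z : C, eFun C x z * eFun C z y = eFun C x y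
  rw [aux_sum_eq (fun z => Nonempty (x ≅ z)) _
      ((1 / isoCard C x) * (if Nonempty (x ≅ y) then 1 / isoCard C x else 0))
    (fun z hz => by simp [eFun, hz])
    (fun z hz => by
      have h1 : (Nonempty (z ≅ y)) ↔ (Nonempty (x ≅ y)) :=
        ⟨fun ⟨i⟩ => ⟨hz.some.trans i⟩, fun ⟨i⟩ => ⟨hz.some.symm.trans i⟩⟩
      have h2 : isoCard C z = isoCard C x := (aux_isoCard_congr hz).symm
      simp only [eFun, if_pos hz, h2]
      by_cases hxy : Nonempty (x ≅ y)
      · rw [if_pos (h1.mpr hxy), if_pos hxy]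
      · rw [if_neg (fun h => hxy (h1.mp h)), if_neg hxy])]
  by_cases hxy : Nonempty (x ≅ y)
  · show isoCard C x * (1 / isoCard C x * (if Nonempty (x ≅ y) then 1 / isoCard C x else 0))
      = eFun C x y
    rw [if_pos hxy, eFun, if_pos hxy]
    have h := aux_isoCard_ne (C := C) x
    field_simp
  · show isoCard C x * (1 / isoCard C x * (if Nonempty (x ≅ y) then 1 / isoCard C x else 0))
      = eFun C x y
    rw [if_neg hxy, eFun, if_neg hxy, mul_zero, mul_zero]

end Aux

/-- every finite EI-category (every endomorphism is an isomorphism)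
has skeletal Möbius inversion: `ζ_C` is invertible in the corner algebra
`e_C M(C) e_C`. -/
theorem ei_has_skeletal_mobius (C : Type u) [Category.{v} C] [Fintype C]
    [∀ x y : C, Fintype (x ⟶ y)]
    (hEI : ∀ (x : C) (f : x ⟶ x), IsIso f) :
    ∃ ν : C → C → ℚ, conv C (eFun C) (conv C ν (eFun C)) = ν ∧
      conv C (zeta C) ν = eFun C ∧ conv C ν (zeta C) = eFun C := by
  classical
  set E : Matrix C C ℚ := Matrix.of (eFun C) with hE
  set Z : Matrix C C ℚ := Matrix.of (zeta C) with hZ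
  set A : Matrix C C ℚ := Z + 1 - E with hA
  have hAentry : ∀ a b : C, A a b =
      (Fintype.card (a ⟶ b) : ℚ) + (if a = b then 1 else 0) - eFun C a b := by
    intro a b
    simp [hA, hE, hZ, Matrix.sub_apply, Matrix.add_apply, Matrix.one_apply, zeta]
  -- Key step: A is invertible.
  have hAkey : ∀ u : C → ℚ, A.mulVec u = 0 → u = 0 := by
    intro u hA0
    by_contra hne
    have hS : {x : C | u x ≠ 0}.Nonempty := by
      by_contra hS
      apply hne
      funext t
      by_contra ht
      exact hS ⟨t, ht⟩
    -- well-founded maximality for the EI preorder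
    set r : C → C → Prop := fun y x => Nonempty (x ⟶ y) ∧ ¬ Nonempty (y ⟶ x) with hrdef
    haveI : IsTrans C r := by
      constructor
      rintro a b c ⟨⟨f⟩, hab⟩ ⟨⟨g⟩, hbc⟩
      exact ⟨⟨g ≫ f⟩, fun ⟨k⟩ => hbc ⟨f ≫ k⟩⟩
    haveI : IsIrrefl C r := ⟨fun a h => h.2 h.1⟩
    obtain ⟨x, hxS, hmax⟩ :=
      (Finite.wellFounded_of_trans_of_irrefl r).has_min {x : C | u x ≠ 0} hS
    -- the isomorphism class of x
    set T : Finset C := Finset.univ.filter (fun z : C => Nonempty (x ≅ z)) with hT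
    have hxT : x ∈ T := by
      rw [hT]
      exact Finset.mem_filter.mpr ⟨Finset.mem_univ x, ⟨Iso.refl x⟩⟩
    have hmcard : (T.card : ℚ) = isoCard C x := rfl
    set m : ℚ := isoCard C x with hm
    have hmne : m ≠ 0 := aux_isoCard_ne x
    set g : ℚ := (Fintype.card (x ⟶ x) : ℚ) with hg
    have hgne : g ≠ 0 := by
      haveI : Nonempty (x ⟶ x) := ⟨𝟙 x⟩
      rw [hg]
      exact_mod_cast Fintype.card_ne_zero (α := (x ⟶ x))
    -- Claim 1: the equation restricts to the isomorphism class of x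
    have claim1 : ∀ a ∈ T, ∑ y ∈ T, A a y * u y = 0 := by
      intro a ha
      have hax : Nonempty (x ≅ a) := by simpa [hT] using ha
      have h0 : ∑ y : C, A a y * u y = 0 := by
        have := congrFun hA0 a
        simpa [Matrix.mulVec, dotProduct] using this
      rw [← Finset.sum_filter_add_sum_filter_not Finset.univ
        (fun z : C => Nonempty (x ≅ z))] at h0
      have hzero : ∑ y ∈ Finset.univ.filter (fun z : C => ¬ Nonempty (x ≅ z)),
          A a y * u y = 0 := by
        apply Finset.sum_eq_zero
        intro y hy
        have hyn : ¬ Nonempty (x ≅ y) := by simpa using (Finset.mem_filter.mp hy).2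
        by_cases huy : u y = 0
        · rw [huy, mul_zero]
        · have hay : ¬ Nonempty (a ⟶ y) := by
            rintro ⟨f⟩
            have hxy : Nonempty (x ⟶ y) := ⟨hax.some.hom ≫ f⟩
            have hyx : Nonempty (y ⟶ x) := by
              by_contra hc
              exact hmax y huy ⟨hxy, hc⟩
            exact hyn (aux_iso_of_hom_of_hom hEI hxy.some hyx.some)
          have hcard : (Fintype.card (a ⟶ y) : ℚ) = 0 := by
            haveI : IsEmpty (a ⟶ y) := ⟨fun f => hay ⟨f⟩⟩
            simp
          have hane : a ≠ y := by
            rintro rfl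
            exact hay ⟨𝟙 a⟩
          have hanoiso : ¬ Nonempty (a ≅ y) := fun ⟨i⟩ => hay ⟨i.hom⟩
          have : A a y = 0 := by
            rw [hAentry, hcard, if_neg hane, eFun, if_neg hanoiso]
            ring
          rw [this, zero_mul]
      rw [hzero, add_zero] at h0
      exact h0
    -- Claim 2: the entries of A on the class
    have claim2 : ∀ a ∈ T, ∀ y ∈ T, A a y = g + (if a = y then 1 else 0) - 1 / m := by
      intro a ha y hy
      have hax : Nonempty (x ≅ a) := by simpa [hT] using ha
      have hxy : Nonempty (x ≅ y) := by simpa [hT] using hy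
      have hcard : (Fintype.card (a ⟶ y) : ℚ) = g := by
        rw [hg]
        exact_mod_cast (aux_hom_card_congr hax.some hxy.some).symm
      have hay : Nonempty (a ≅ y) := ⟨hax.some.symm.trans hxy.some⟩
      have hia : isoCard C a = m := by
        rw [hm]
        exact (aux_isoCard_congr hax).symm
      rw [hAentry, hcard, eFun, if_pos hay, hia]
    -- combine
    set S0 : ℚ := ∑ y ∈ T, u y with hS0
    have claim3 : ∀ a ∈ T, (g - 1 / m) * S0 + u a = 0 := by
      intro a ha
      have := claim1 a ha
      rw [Finset.sum_congr rfl (fun y hy => by rw [claim2 a ha y hy])] at this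
      have expand : ∑ y ∈ T, (g + (if a = y then 1 else 0) - 1 / m) * u y
          = (g - 1 / m) * S0 + ∑ y ∈ T, (if a = y then u y else 0) := by
        rw [hS0, Finset.mul_sum, ← Finset.sum_add_distrib]
        apply Finset.sum_congr rfl
        intro y _
        by_cases h : a = y <;> simp [h] <;> ring
      rw [expand, Finset.sum_ite_eq T a u, if_pos ha] at this
      exact this
    -- summing over the class gives m * g * S0 = 0
    have hsum : (T.card : ℚ) * ((g - 1 / m) * S0) + S0 = 0 := by
      have := Finset.sum_congr rfl claim3
      rw [Finset.sum_add_distrib, Finset.sum_const, ← hS0, nsmul_eq_mul] at this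
      rw [Finset.sum_const, nsmul_eq_mul, mul_zero] at this
      exact this
    rw [hmcard] at hsum
    have hS0zero : S0 = 0 := by
      have h1 : m * g * S0 = 0 := by
        have expand : m * ((g - 1 / m) * S0) + S0 = m * g * S0 := by
          field_simp
          ring
        rw [expand] at hsum
        exact hsum
      rcases mul_eq_zero.mp h1 with h | h
      · exact absurd (mul_eq_zero.mp h) (by push_neg; exact ⟨hmne, hgne⟩)
      · exact h
    have := claim3 x hxT
    rw [hS0zero, mul_zero, zero_add] at this
    exact hxS this
  -- invertibility of A
  have hAunit : IsUnit A := by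
    rw [← Matrix.mulVec_injective_iff_isUnit]
    intro v w hvw
    rw [← sub_eq_zero]
    apply hAkey
    rw [Matrix.mulVec_sub, hvw, sub_self]
  have hdet : IsUnit A.det := (Matrix.isUnit_iff_isUnit_det A).mp hAunit
  set B : Matrix C C ℚ := A⁻¹ with hB
  have hAB : A * B = 1 := Matrix.mul_nonsing_inv A hdet
  have hBA : B * A = 1 := Matrix.nonsing_inv_mul A hdet
  -- structural equations
  have hEZ : E * Z = Z := aux_EZ
  have hZE : Z * E = Z := aux_ZE
  have hEE : E * E = E := aux_EE
  have hEA : E * A = Z := by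
    rw [hA, Matrix.mul_sub, Matrix.mul_add, hEZ, hEE, Matrix.mul_one]
    abel
  have hAE : A * E = Z := by
    rw [hA, Matrix.sub_mul, Matrix.add_mul, hZE, hEE, Matrix.one_mul]
    abel
  have hcomm : E * A = A * E := by rw [hEA, hAE]
  have hBcomm : E * B = B * E := by
    calc E * B = B * A * (E * B) := by rw [hBA, Matrix.one_mul]
    _ = B * (A * E) * B := by simp only [Matrix.mul_assoc]
    _ = B * (E * A) * B := by rw [hcomm]
    _ = B * E * (A * B) := by simp only [Matrix.mul_assoc]
    _ = B * E := by rw [hAB, Matrix.mul_one]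
  -- the Möbius function
  refine ⟨fun a b => (B * E) a b, ?_, ?_, ?_⟩
  · -- E * ((B*E) * E) = B*E
    have key : E * ((B * E) * E) = B * E := by
      calc E * ((B * E) * E) = E * (B * (E * E)) := by simp only [Matrix.mul_assoc]
      _ = E * (B * E) := by rw [hEE]
      _ = (E * B) * E := by simp only [Matrix.mul_assoc]
      _ = (B * E) * E := by rw [hBcomm]
      _ = B * (E * E) := by simp only [Matrix.mul_assoc]
      _ = B * E := by rw [hEE]
    funext a b
    have h1 : conv C (fun a b => (B * E) a b) (eFun C) = fun a b => ((B * E) * E) a b := by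
      funext a b
      rw [conv, Matrix.mul_apply]
      rfl
    rw [h1]
    show ∑ z : C, eFun C a z * ((B * E) * E) z b = (B * E) a b
    have := congrFun (congrFun key a) b
    rw [Matrix.mul_apply] at this
    exact this
  · -- Z * (B*E) = E
    have key : Z * (B * E) = E := by
      calc Z * (B * E) = (A * E) * (B * E) := by rw [hAE]
      _ = A * ((E * B) * E) := by simp only [Matrix.mul_assoc]
      _ = A * ((B * E) * E) := by rw [hBcomm]
      _ = (A * B) * (E * E) := by simp only [Matrix.mul_assoc]
      _ = E := by rw [hAB, hEE, Matrix.one_mul]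
    funext a b
    show ∑ z : C, zeta C a z * (B * E) z b = eFun C a b
    have := congrFun (congrFun key a) b
    rw [Matrix.mul_apply] at this
    exact this
  · -- (B*E) * Z = E
    have key : (B * E) * Z = E := by
      calc (B * E) * Z = B * (E * Z) := by simp only [Matrix.mul_assoc]
      _ = B * Z := by rw [hEZ]
      _ = B * (A * E) := by rw [hAE]
      _ = (B * A) * E := by simp only [Matrix.mul_assoc]
      _ = E := by rw [hBA, Matrix.one_mul]
    funext a b
    show ∑ z : C, (B * E) a z * zeta C z b = eFun C a b
    have := congrFun (congrFun key a) b
    rw [Matrix.mul_apply] at this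
    exact this
end

section
/- Suppose a finite category C has elements α, β in M(C) with ζ_C β = e_C and α ζ_C = e_C. Then the function β·𝟙 (where 𝟙 is the constant function 1 on objects and the action is matrix-vector multiplication) is a weighting on C, i.e., ζ_C (β𝟙) = 𝟙, and 𝟙·α is a coweighting on C. -/
open CategoryTheory
open scoped Classical

universe u v

lemma isoCard_congr (C : Type u) [Category.{v} C] [Fintype C] {x y : C}
    (h : Nonempty (x ≅ y)) : isoCard C x = isoCard C y := by
  unfold isoCard
  congr 2
  ext z
  simp only [Finset.mem_filter, Finset.mem_univ, true_and]
  exact ⟨fun ⟨i⟩ => ⟨h.some.symm.trans i⟩, fun ⟨i⟩ => ⟨h.some.trans i⟩⟩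

lemma isoCard_pos (C : Type u) [Category.{v} C] [Fintype C] (x : C) :
    isoCard C x ≠ 0 := by
  unfold isoCard
  have hx : x ∈ Finset.univ.filter fun z : C => Nonempty (x ≅ z) := by
    simp only [Finset.mem_filter, Finset.mem_univ, true_and]
    exact ⟨Iso.refl x⟩
  have := Finset.card_pos.mpr ⟨x, hx⟩
  positivity

lemma eSumRow (C : Type u) [Category.{v} C] [Fintype C] (x : C) :
    ∑ z : C, eFun C x z = 1 := by
  unfold eFun
  rw [Finset.sum_ite, Finset.sum_const_zero, add_zero, Finset.sum_const,
    nsmul_eq_mul]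
  have h := isoCard_pos C x
  rw [show ((Finset.univ.filter fun z : C => Nonempty (x ≅ z)).card : ℚ) = isoCard C x from rfl]
  field_simp

lemma eFun_symm (C : Type u) [Category.{v} C] [Fintype C] (x y : C) :
    eFun C x y = eFun C y x := by
  unfold eFun
  by_cases h : Nonempty (x ≅ y)
  · have h' : Nonempty (y ≅ x) := ⟨h.some.symm⟩
    rw [if_pos h, if_pos h', isoCard_congr C h]
  · have h' : ¬ Nonempty (y ≅ x) := fun ⟨i⟩ => h ⟨i.symm⟩
    rw [if_neg h, if_neg h']

/-- if `ζ_C β = e_C` and `α ζ_C = e_C`, then `β·𝟙` is a weighting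
on `C` and `𝟙·α` is a coweighting on `C`. -/
theorem weighting_of_onesided_inverses (C : Type u) [Category.{v} C] [Fintype C]
    [∀ x y : C, Fintype (x ⟶ y)] (α β : C → C → ℚ)
    (hβ : conv C (zeta C) β = eFun C) (hα : conv C α (zeta C) = eFun C) :
    (∀ x : C, ∑ y : C, zeta C x y * (∑ z : C, β y z) = 1) ∧
    (∀ y : C, ∑ x : C, (∑ z : C, α z x) * zeta C x y = 1) := by
  constructor
  · intro x
    have : ∑ y : C, zeta C x y * (∑ z : C, β y z) = ∑ z : C, eFun C x z := by
      simp_rw [Finset.mul_sum]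
      rw [Finset.sum_comm]
      exact Finset.sum_congr rfl fun z _ => congrFun (congrFun hβ x) z
    rw [this, eSumRow]
  · intro y
    have : ∑ x : C, (∑ z : C, α z x) * zeta C x y = ∑ z : C, eFun C z y := by
      simp_rw [Finset.sum_mul]
      rw [Finset.sum_comm]
      exact Finset.sum_congr rfl fun z _ => congrFun (congrFun hα z) y
    rw [this]
    simp_rw [eFun_symm C _ y]
    exact eSumRow C y
end
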